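/- arXiv:1912.11718 — 2 statements merged into one kernel-verified Lean document; each statement's English description precedes it below -/
import Mathlib

section
/- With Φ as above and Rot(Φ_t) := det M(Φ_t) the rotational curvature, for all (u,r,t,v,ρ) with Φ(u,r,t;v,ρ) = 0 one has Rot(Φ_t)(u,r;v,ρ) = 4b²·r·t·ρ·∂_tΦ(u,r,t;v,ρ), where ∂_tΦ = b²t(t² − r² − ρ²). -/
/-- The defining function Φ(u,r,t;v,ρ) = (u−v)² − (b/2)²(4r²ρ² − (r²+ρ²−t²)²). -/
noncomputable def Phi (b u r t v ρ : ℝ) : ℝ :=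
  (u - v) ^ 2 - (b / 2) ^ 2 * (4 * r ^ 2 * ρ ^ 2 - (r ^ 2 + ρ ^ 2 - t ^ 2) ^ 2)

/-- ∂_u Φ -/
noncomputable def Pu (b u r t v ρ : ℝ) : ℝ := deriv (fun u' => Phi b u' r t v ρ) u
/-- ∂_r Φ -/
noncomputable def Pr (b u r t v ρ : ℝ) : ℝ := deriv (fun r' => Phi b u r' t v ρ) r
/-- ∂_t Φ -/
noncomputable def Pt (b u r t v ρ : ℝ) : ℝ := deriv (fun t' => Phi b u r t' v ρ) t
/-- ∂_v Φ -/
noncomputable def Pv (b u r t v ρ : ℝ) : ℝ := deriv (fun v' => Phi b u r t v' ρ) v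
/-- ∂_ρ Φ -/
noncomputable def Pp (b u r t v ρ : ℝ) : ℝ := deriv (fun ρ' => Phi b u r t v ρ') ρ
/-- ∂²_{uv} Φ -/
noncomputable def Puv (b u r t v ρ : ℝ) : ℝ := deriv (fun u' => Pv b u' r t v ρ) u
/-- ∂²_{uρ} Φ -/
noncomputable def Pup (b u r t v ρ : ℝ) : ℝ := deriv (fun u' => Pp b u' r t v ρ) u
/-- ∂²_{rv} Φ -/
noncomputable def Prv (b u r t v ρ : ℝ) : ℝ := deriv (fun r' => Pv b u r' t v ρ) r
/-- ∂²_{rρ} Φ -/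
noncomputable def Prp (b u r t v ρ : ℝ) : ℝ := deriv (fun r' => Pp b u r' t v ρ) r
/-- ∂²_{tv} Φ -/
noncomputable def Ptv (b u r t v ρ : ℝ) : ℝ := deriv (fun t' => Pv b u r t' v ρ) t
/-- ∂²_{tρ} Φ -/
noncomputable def Ptp (b u r t v ρ : ℝ) : ℝ := deriv (fun t' => Pp b u r t' v ρ) t
/-- ∂²_{vv} Φ -/
noncomputable def Pvv (b u r t v ρ : ℝ) : ℝ := deriv (fun v' => Pv b u r t v' ρ) v
/-- ∂²_{vρ} Φ -/
noncomputable def Pvp (b u r t v ρ : ℝ) : ℝ := deriv (fun v' => Pp b u r t v' ρ) v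
/-- ∂²_{ρv} Φ -/
noncomputable def Ppv (b u r t v ρ : ℝ) : ℝ := deriv (fun ρ' => Pv b u r t v ρ') ρ
/-- ∂²_{ρρ} Φ -/
noncomputable def Ppp (b u r t v ρ : ℝ) : ℝ := deriv (fun ρ' => Pp b u r t v ρ') ρ


lemma Pu_eq (b u r t v ρ : ℝ) : Pu b u r t v ρ = 2 * (u - v) := by
  have h : HasDerivAt (fun u' : ℝ => Phi b u' r t v ρ) (2 * (u - v)) u := by
    unfold Phi
    have h0 := (((hasDerivAt_id u).sub_const v).pow 2).sub_const
      ((b / 2) ^ 2 * (4 * r ^ 2 * ρ ^ 2 - (r ^ 2 + ρ ^ 2 - t ^ 2) ^ 2))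
    convert h0 using 1 <;> (try rfl) <;> ·
      try simp only [id_eq]
      push_cast
      ring
  exact h.deriv

lemma Pv_eq (b u r t v ρ : ℝ) : Pv b u r t v ρ = -(2 * (u - v)) := by
  have h : HasDerivAt (fun v' : ℝ => Phi b u r t v' ρ) (-(2 * (u - v))) v := by
    unfold Phi
    have h0 := (((hasDerivAt_id v).const_sub u).pow 2).sub_const
      ((b / 2) ^ 2 * (4 * r ^ 2 * ρ ^ 2 - (r ^ 2 + ρ ^ 2 - t ^ 2) ^ 2))
    convert h0 using 1 <;> (try rfl) <;> ·
      try simp only [id_eq]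
      push_cast
      ring
  exact h.deriv

lemma Pp_eq (b u r t v ρ : ℝ) :
    Pp b u r t v ρ = -((b / 2) ^ 2 * (8 * r ^ 2 * ρ - 4 * ρ * (r ^ 2 + ρ ^ 2 - t ^ 2))) := by
  have h : HasDerivAt (fun ρ' : ℝ => Phi b u r t v ρ')
      (-((b / 2) ^ 2 * (8 * r ^ 2 * ρ - 4 * ρ * (r ^ 2 + ρ ^ 2 - t ^ 2)))) ρ := by
    unfold Phi
    have hsq : HasDerivAt (fun x : ℝ => x ^ 2) (2 * ρ) ρ := by
      simpa using hasDerivAt_pow 2 ρ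
    have h1 := hsq.const_mul (4 * r ^ 2)
    have h2 := ((hsq.const_add (r ^ 2)).sub_const (t ^ 2)).pow 2
    have h3 := ((h1.sub h2).const_mul ((b / 2) ^ 2)).const_sub ((u - v) ^ 2)
    convert h3 using 1 <;> (try rfl) <;> ·
      try simp only [id_eq]
      push_cast
      ring
  exact h.deriv

lemma Pr_eq (b u r t v ρ : ℝ) :
    Pr b u r t v ρ = -((b / 2) ^ 2 * (8 * r * ρ ^ 2 - 4 * r * (r ^ 2 + ρ ^ 2 - t ^ 2))) := by
  have h : HasDerivAt (fun r' : ℝ => Phi b u r' t v ρ)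
      (-((b / 2) ^ 2 * (8 * r * ρ ^ 2 - 4 * r * (r ^ 2 + ρ ^ 2 - t ^ 2)))) r := by
    unfold Phi
    have hsq : HasDerivAt (fun x : ℝ => x ^ 2) (2 * r) r := by
      simpa using hasDerivAt_pow 2 r
    have h1 := (hsq.const_mul 4).mul_const (ρ ^ 2)
    have h2 := ((hsq.add_const (ρ ^ 2)).sub_const (t ^ 2)).pow 2
    have h3 := ((h1.sub h2).const_mul ((b / 2) ^ 2)).const_sub ((u - v) ^ 2)
    convert h3 using 1 <;> (try rfl) <;> ·
      try simp only [id_eq]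
      push_cast
      ring
  exact h.deriv

lemma Pt_eq (b u r t v ρ : ℝ) :
    Pt b u r t v ρ = -((b / 2) ^ 2 * (4 * t * (r ^ 2 + ρ ^ 2 - t ^ 2))) := by
  have h : HasDerivAt (fun t' : ℝ => Phi b u r t' v ρ)
      (-((b / 2) ^ 2 * (4 * t * (r ^ 2 + ρ ^ 2 - t ^ 2)))) t := by
    unfold Phi
    have hsq : HasDerivAt (fun x : ℝ => x ^ 2) (2 * t) t := by
      simpa using hasDerivAt_pow 2 t
    have h2 := ((hsq.const_sub (r ^ 2 + ρ ^ 2)).pow 2)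
    have h2' : HasDerivAt (fun t' : ℝ => (r ^ 2 + ρ ^ 2 - t' ^ 2) ^ 2)
        ((2 : ℕ) * (r ^ 2 + ρ ^ 2 - t ^ 2) ^ 1 * (-(2 * t))) t := h2
    have h3 := ((h2'.const_sub (4 * r ^ 2 * ρ ^ 2)).const_mul ((b / 2) ^ 2)).const_sub
      ((u - v) ^ 2)
    convert h3 using 1 <;> (try rfl) <;> ·
      try simp only [id_eq]
      push_cast
      ring
  exact h.deriv

lemma Puv_eq (b u r t v ρ : ℝ) : Puv b u r t v ρ = -2 := by
  have hfun : (fun u' : ℝ => Pv b u' r t v ρ) = fun u' : ℝ => -(2 * (u' - v)) := by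
    funext u'; exact Pv_eq b u' r t v ρ
  have h : HasDerivAt (fun u' : ℝ => -(2 * (u' - v))) (-2 : ℝ) u := by
    have h0 := (((hasDerivAt_id u).sub_const v).const_mul 2).neg
    convert h0 using 1 <;> (try rfl) <;> simp
  unfold Puv
  rw [hfun, h.deriv]

lemma Pup_eq (b u r t v ρ : ℝ) : Pup b u r t v ρ = 0 := by
  have hfun : (fun u' : ℝ => Pp b u' r t v ρ)
      = fun _ : ℝ => -((b / 2) ^ 2 * (8 * r ^ 2 * ρ - 4 * ρ * (r ^ 2 + ρ ^ 2 - t ^ 2))) := by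
    funext u'; exact Pp_eq b u' r t v ρ
  unfold Pup
  rw [hfun, deriv_const]

lemma Prv_eq (b u r t v ρ : ℝ) : Prv b u r t v ρ = 0 := by
  have hfun : (fun r' : ℝ => Pv b u r' t v ρ) = fun _ : ℝ => -(2 * (u - v)) := by
    funext r'; exact Pv_eq b u r' t v ρ
  unfold Prv
  rw [hfun, deriv_const]

lemma Prp_eq (b u r t v ρ : ℝ) : Prp b u r t v ρ = -((b / 2) ^ 2 * (8 * r * ρ)) := by
  have hfun : (fun r' : ℝ => Pp b u r' t v ρ)
      = fun r' : ℝ => -((b / 2) ^ 2 * (8 * r' ^ 2 * ρ - 4 * ρ * (r' ^ 2 + ρ ^ 2 - t ^ 2))) := by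
    funext r'; exact Pp_eq b u r' t v ρ
  have h : HasDerivAt
      (fun r' : ℝ => -((b / 2) ^ 2 * (8 * r' ^ 2 * ρ - 4 * ρ * (r' ^ 2 + ρ ^ 2 - t ^ 2))))
      (-((b / 2) ^ 2 * (8 * r * ρ))) r := by
    have hsq : HasDerivAt (fun x : ℝ => x ^ 2) (2 * r) r := by
      simpa using hasDerivAt_pow 2 r
    have h1 := (hsq.const_mul 8).mul_const ρ
    have h2 := ((hsq.add_const (ρ ^ 2)).sub_const (t ^ 2)).const_mul (4 * ρ)
    have h3 := ((h1.sub h2).const_mul ((b / 2) ^ 2)).neg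
    convert h3 using 1 <;> (try rfl) <;> ·
      try simp only [id_eq]
      push_cast
      ring
  unfold Prp
  rw [hfun, h.deriv]

/-- Key identity: on the zero set of Φ, the rotational curvature Rot(Φ_t)
equals 4b²rtρ·∂_tΦ. -/
theorem statement6 (b u r t v ρ : ℝ) (hΦ : Phi b u r t v ρ = 0) :
    Matrix.det !![Phi b u r t v ρ, Pv b u r t v ρ, Pp b u r t v ρ;
                  Pu b u r t v ρ, Puv b u r t v ρ, Pup b u r t v ρ;
                  Pr b u r t v ρ, Prv b u r t v ρ, Prp b u r t v ρ]
      = 4 * b ^ 2 * r * t * ρ * Pt b u r t v ρ := by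
  simp only [Matrix.det_fin_three, Matrix.cons_val', Matrix.cons_val_zero, Matrix.cons_val_one,
    Matrix.head_cons, Matrix.empty_val', Matrix.cons_val_fin_one, Matrix.head_fin_const,
    Matrix.cons_val_two, Matrix.tail_cons, Matrix.of_apply]
  rw [Pu_eq, Pv_eq, Pp_eq, Pr_eq, Pt_eq, Puv_eq, Pup_eq, Prv_eq, Prp_eq, hΦ]
  have h := hΦ
  unfold Phi at h
  linear_combination (-(8 * b ^ 2 * r * ρ)) * h
end

section
/- Suppose (u₀,r₀,t₀,v₀,ρ₀) satisfy Φ(u₀,r₀,t₀;v₀,ρ₀) = 0 and t₀² = r₀² + ρ₀² (equivalently Rot(Φ_{t₀}) vanishes, assuming r₀t₀ρ₀ ≠ 0). Let M := M(Φ_{t₀})(u₀,r₀;v₀,ρ₀) be the 3×3 Monge–Ampère matrix. Then the vector V := (1, u₀−v₀, −ρ₀)ᵀ satisfies M·V = 0, and the vector U := (1, −(u₀−v₀), −r₀) satisfies Uᵀ·M = 0. -/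
section Aux
variable (b u r t v ρ : ℝ)

lemma pu_eq : Pu b u r t v ρ = 2 * (u - v) := by
  have h : HasDerivAt (fun u' : ℝ => Phi b u' r t v ρ)
      ((2 : ℕ) * (u - v) ^ 1 * 1) u := by
    unfold Phi
    exact (((hasDerivAt_id u).sub_const v).pow 2).sub_const _
  rw [Pu, h.deriv]; ring

lemma pv_eq : Pv b u r t v ρ = -(2 * (u - v)) := by
  have h : HasDerivAt (fun v' : ℝ => Phi b u r t v' ρ)
      ((2 : ℕ) * (u - v) ^ 1 * (-1)) v := by
    unfold Phi
    exact (((hasDerivAt_id v).const_sub u).pow 2).sub_const _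
  rw [Pv, h.deriv]; ring

lemma pr_eq : Pr b u r t v ρ =
    -((b / 2) ^ 2 * (8 * r * ρ ^ 2 - 4 * r * (r ^ 2 + ρ ^ 2 - t ^ 2))) := by
  have h1 : HasDerivAt (fun r' : ℝ => 4 * r' ^ 2 * ρ ^ 2)
      (4 * ((2 : ℕ) * r ^ 1 * 1) * ρ ^ 2) r := by
    simpa [mul_comm, mul_assoc, mul_left_comm] using
      ((((hasDerivAt_id r).pow 2).const_mul (4 : ℝ)).mul_const (ρ ^ 2))
  have h2 : HasDerivAt (fun r' : ℝ => (r' ^ 2 + ρ ^ 2 - t ^ 2) ^ 2)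
      ((2 : ℕ) * (r ^ 2 + ρ ^ 2 - t ^ 2) ^ 1 * ((2 : ℕ) * r ^ 1 * 1)) r :=
    ((((hasDerivAt_id r).pow 2).add_const (ρ ^ 2)).sub_const (t ^ 2)).pow 2
  have h : HasDerivAt (fun r' : ℝ => Phi b u r' t v ρ)
      (0 - (b / 2) ^ 2 * (4 * ((2 : ℕ) * r ^ 1 * 1) * ρ ^ 2 -
        (2 : ℕ) * (r ^ 2 + ρ ^ 2 - t ^ 2) ^ 1 * ((2 : ℕ) * r ^ 1 * 1))) r := by
    unfold Phi
    exact (hasDerivAt_const r _).sub ((h1.sub h2).const_mul _)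
  rw [Pr, h.deriv]; ring

lemma pp_eq : Pp b u r t v ρ =
    -((b / 2) ^ 2 * (8 * r ^ 2 * ρ - 4 * ρ * (r ^ 2 + ρ ^ 2 - t ^ 2))) := by
  have h1 : HasDerivAt (fun ρ' : ℝ => 4 * r ^ 2 * ρ' ^ 2)
      (4 * r ^ 2 * ((2 : ℕ) * ρ ^ 1 * 1)) ρ :=
    ((hasDerivAt_id ρ).pow 2).const_mul _
  have h2 : HasDerivAt (fun ρ' : ℝ => (r ^ 2 + ρ' ^ 2 - t ^ 2) ^ 2)
      ((2 : ℕ) * (r ^ 2 + ρ ^ 2 - t ^ 2) ^ 1 * ((2 : ℕ) * ρ ^ 1 * 1)) ρ :=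
    ((((hasDerivAt_id ρ).pow 2).const_add (r ^ 2)).sub_const (t ^ 2)).pow 2
  have h : HasDerivAt (fun ρ' : ℝ => Phi b u r t v ρ')
      (0 - (b / 2) ^ 2 * (4 * r ^ 2 * ((2 : ℕ) * ρ ^ 1 * 1) -
        (2 : ℕ) * (r ^ 2 + ρ ^ 2 - t ^ 2) ^ 1 * ((2 : ℕ) * ρ ^ 1 * 1))) ρ := by
    unfold Phi
    exact (hasDerivAt_const ρ _).sub ((h1.sub h2).const_mul _)
  rw [Pp, h.deriv]; ring

lemma puv_eq : Puv b u r t v ρ = -2 := by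
  have h : HasDerivAt (fun u' : ℝ => -(2 * (u' - v))) (-(2 * 1)) u := by
    exact (((hasDerivAt_id u).sub_const v).const_mul 2).neg
  have : Puv b u r t v ρ = deriv (fun u' : ℝ => -(2 * (u' - v))) u := by
    unfold Puv; congr 1; funext u'; rw [pv_eq]
  rw [this, h.deriv]; norm_num

lemma pup_eq : Pup b u r t v ρ = 0 := by
  have : Pup b u r t v ρ =
      deriv (fun _ : ℝ => -((b / 2) ^ 2 * (8 * r ^ 2 * ρ - 4 * ρ * (r ^ 2 + ρ ^ 2 - t ^ 2)))) u := by
    unfold Pup; congr 1; funext u'; rw [pp_eq]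
  rw [this, deriv_const]

lemma prv_eq : Prv b u r t v ρ = 0 := by
  have : Prv b u r t v ρ = deriv (fun _ : ℝ => -(2 * (u - v))) r := by
    unfold Prv; congr 1; funext r'; rw [pv_eq]
  rw [this, deriv_const]

lemma prp_eq : Prp b u r t v ρ = -(2 * b ^ 2 * r * ρ) := by
  have h1 : HasDerivAt (fun r' : ℝ => 8 * r' ^ 2 * ρ)
      (8 * ((2 : ℕ) * r ^ 1 * 1) * ρ) r := by
    simpa [mul_comm, mul_assoc, mul_left_comm] using
      ((((hasDerivAt_id r).pow 2).const_mul (8 : ℝ)).mul_const ρ)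
  have h2 : HasDerivAt (fun r' : ℝ => 4 * ρ * (r' ^ 2 + ρ ^ 2 - t ^ 2))
      (4 * ρ * ((2 : ℕ) * r ^ 1 * 1)) r :=
    ((((hasDerivAt_id r).pow 2).add_const (ρ ^ 2)).sub_const (t ^ 2)).const_mul _
  have h : HasDerivAt
      (fun r' : ℝ => -((b / 2) ^ 2 * (8 * r' ^ 2 * ρ - 4 * ρ * (r' ^ 2 + ρ ^ 2 - t ^ 2))))
      (-((b / 2) ^ 2 * (8 * ((2 : ℕ) * r ^ 1 * 1) * ρ - 4 * ρ * ((2 : ℕ) * r ^ 1 * 1)))) r :=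
    ((h1.sub h2).const_mul _).neg
  have heq : Prp b u r t v ρ =
      deriv (fun r' : ℝ => -((b / 2) ^ 2 * (8 * r' ^ 2 * ρ - 4 * ρ * (r' ^ 2 + ρ ^ 2 - t ^ 2)))) r := by
    unfold Prp; congr 1; funext r'; rw [pp_eq]
  rw [heq, h.deriv]; ring

end Aux

/-- At a fold point (Φ = 0 and t² = r² + ρ², with rtρ ≠ 0), the vector
V = (1, u−v, −ρ) spans the kernel and U = (1, −(u−v), −r) the cokernel of the
Monge–Ampère matrix M(Φ_t). -/
theorem statement10 (b u r t v ρ : ℝ) (hb : b ≠ 0) (hrtρ : r * t * ρ ≠ 0)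
    (hΦ : Phi b u r t v ρ = 0) (hfold : t ^ 2 = r ^ 2 + ρ ^ 2) :
    Matrix.mulVec !![Phi b u r t v ρ, Pv b u r t v ρ, Pp b u r t v ρ;
                     Pu b u r t v ρ, Puv b u r t v ρ, Pup b u r t v ρ;
                     Pr b u r t v ρ, Prv b u r t v ρ, Prp b u r t v ρ]
        ![1, u - v, -ρ] = 0 ∧
    Matrix.vecMul ![1, -(u - v), -r]
        !![Phi b u r t v ρ, Pv b u r t v ρ, Pp b u r t v ρ;
           Pu b u r t v ρ, Puv b u r t v ρ, Pup b u r t v ρ;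
           Pr b u r t v ρ, Prv b u r t v ρ, Prp b u r t v ρ] = 0 := by
  have hs : r ^ 2 + ρ ^ 2 - t ^ 2 = 0 := by linarith
  have hΦ' : (u - v) ^ 2 - (b / 2) ^ 2 * (4 * r ^ 2 * ρ ^ 2 - (r ^ 2 + ρ ^ 2 - t ^ 2) ^ 2) = 0 := hΦ
  have hkey : (u - v) ^ 2 = b ^ 2 * r ^ 2 * ρ ^ 2 := by
    linear_combination hΦ' - b ^ 2 / 4 * (r ^ 2 + ρ ^ 2 - t ^ 2) * hs
  constructor
  · funext i; fin_cases i
    · simp [Matrix.mulVec, dotProduct, Fin.sum_univ_three, hΦ,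
        pu_eq, pv_eq, pp_eq, pr_eq, puv_eq, pup_eq, prv_eq, prp_eq]
      linear_combination (-2 : ℝ) * hkey - b ^ 2 * ρ ^ 2 * hs
    · simp [Matrix.mulVec, dotProduct, Fin.sum_univ_three, hΦ,
        pu_eq, pv_eq, pp_eq, pr_eq, puv_eq, pup_eq, prv_eq, prp_eq]
    · simp [Matrix.mulVec, dotProduct, Fin.sum_univ_three, hΦ,
        pu_eq, pv_eq, pp_eq, pr_eq, puv_eq, pup_eq, prv_eq, prp_eq]
      linear_combination b ^ 2 * r * hs
  · funext j; fin_cases j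
    · simp [Matrix.vecMul, dotProduct, Fin.sum_univ_three, hΦ,
        pu_eq, pv_eq, pp_eq, pr_eq, puv_eq, pup_eq, prv_eq, prp_eq]
      linear_combination (-2 : ℝ) * hkey - b ^ 2 * r ^ 2 * hs
    · simp [Matrix.vecMul, dotProduct, Fin.sum_univ_three, hΦ,
        pu_eq, pv_eq, pp_eq, pr_eq, puv_eq, pup_eq, prv_eq, prp_eq]
      ring
    · simp [Matrix.vecMul, dotProduct, Fin.sum_univ_three, hΦ,
        pu_eq, pv_eq, pp_eq, pr_eq, puv_eq, pup_eq, prv_eq, prp_eq]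
      linear_combination b ^ 2 * ρ * hs
end
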